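/- Let H be a finitely generated group with trivial center, A a finitely generated abelian group, and φ the automorphism of H × A given by φ(h, a) = (ψ(h), α(h)·γ(a)), where ψ is an automorphism of H, γ is an automorphism of A, and α : H → A is a homomorphism. If Fix γ is finite, then Fix φ is finitely generated if and only if Fix ψ is finitely generated. -/

import Mathlib

/-- The subgroup of fixed points of an automorphism `φ` of `G`:
`Fix φ = {g ∈ G | φ(g) = g}`. -/
def fixedSubgroup {G : Type*} [Group G] (φ : G ≃* G) : Subgroup G where
  carrier := {g | φ g = g}
  one_mem' := map_one φ
  mul_mem' := by
    intro a b ha hb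
    simp only [Set.mem_setOf_eq, map_mul] at *
    rw [ha, hb]
  inv_mem' := by
    intro a ha
    simp only [Set.mem_setOf_eq, map_inv] at *
    rw [ha]


/-- If `f : G →* Q` is surjective with finitely generated kernel and finitely
generated codomain, then `G` is finitely generated. -/
lemma aux_fg_of_surjective_ker {G Q : Type*} [Group G] [Group Q] (f : G →* Q)
    (hs : Function.Surjective f) (hker : f.ker.FG) (hQ : Group.FG Q) : Group.FG G := by
  obtain ⟨S, hS, hSfin⟩ := Group.fg_iff.mp hQ
  obtain ⟨T, hT, hTfin⟩ := (Subgroup.fg_iff f.ker).mp hker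
  choose sec hsec using hs
  rw [Group.fg_iff]
  refine ⟨sec '' S ∪ T, ?_, (hSfin.image _).union hTfin⟩
  set U : Set G := sec '' S ∪ T with hU
  have hkle : f.ker ≤ Subgroup.closure U := by
    rw [← hT]; exact Subgroup.closure_mono Set.subset_union_right
  have hmap : Subgroup.map f (Subgroup.closure U) = ⊤ := by
    rw [MonoidHom.map_closure, eq_top_iff, ← hS]
    apply Subgroup.closure_mono
    intro s hsS
    exact ⟨sec s, Or.inl ⟨s, hsS, rfl⟩, hsec s⟩
  rw [eq_top_iff]
  intro g _
  have hg : f g ∈ Subgroup.map f (Subgroup.closure U) := by rw [hmap]; exact Subgroup.mem_top _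
  obtain ⟨c, hc, hfc⟩ := hg
  have hk : g * c⁻¹ ∈ f.ker := by
    rw [MonoidHom.mem_ker, map_mul, map_inv, hfc, mul_inv_cancel]
  have : g = g * c⁻¹ * c := by group
  rw [this]
  exact mul_mem (hkle hk) hc


/-- For a f.g. abelian group `A` and an endomorphism `δ` with finite kernel,
every element has a positive power lying in the range of `δ`. -/
lemma aux_exists_pow_mem_range {A : Type*} [CommGroup A] (hA : Group.FG A) (δ : A →* A)
    (hker : Finite δ.ker) (a : A) : ∃ n : ℕ, 0 < n ∧ a ^ n ∈ δ.range := by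
  haveI := hA
  haveI : Module.Finite ℤ (Additive A) := Module.Finite.iff_addGroup_fg.mpr inferInstance
  set f : Additive A →ₗ[ℤ] Additive A := (MonoidHom.toAdditive δ).toIntLinearMap with hfdef
  have hmem : ∀ x : Additive A, f x = Additive.ofMul (δ x.toMul) := fun x => rfl
  haveI hkerfin : Finite (LinearMap.ker f) := by
    refine Finite.of_injective (fun x : LinearMap.ker f =>
      (⟨x.1.toMul, ?_⟩ : δ.ker)) ?_
    · have hx := x.2
      rw [LinearMap.mem_ker, hmem] at hx
      rw [MonoidHom.mem_ker]
      exact Additive.ofMul.injective hx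
    · intro x y h
      exact Subtype.ext (congrArg Subtype.val h)
  have hk0 : Module.rank ℤ (LinearMap.ker f) = 0 := by
    rw [rank_eq_zero_iff]
    intro x
    refine ⟨(Nat.card (LinearMap.ker f) : ℤ), ?_, ?_⟩
    · exact_mod_cast Nat.card_ne_zero.mpr ⟨⟨0, (LinearMap.ker f).zero_mem⟩, hkerfin⟩
    · rw [natCast_zsmul]
      exact card_nsmul_eq_zero'
  have h2 := rank_quotient_add_rank_of_isDomain (R := ℤ) (LinearMap.ker f)
  rw [hk0, add_zero] at h2
  have hr : Module.rank ℤ (LinearMap.range f) = Module.rank ℤ (Additive A) := by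
    rw [← h2]
    exact ((LinearMap.quotKerEquivRange f).rank_eq).symm
  have h1 := rank_quotient_add_rank_of_isDomain (R := ℤ) (LinearMap.range f)
  rw [hr] at h1
  have hq0 : Module.rank ℤ (Additive A ⧸ LinearMap.range f) = 0 := by
    by_contra hne
    have h1' : 1 + Module.rank ℤ (Additive A) ≤ Module.rank ℤ (Additive A) := by
      conv_rhs => rw [← h1]
      gcongr
      exact Cardinal.one_le_iff_ne_zero.mpr hne
    obtain ⟨n, hn⟩ := Cardinal.lt_aleph0.mp (Module.rank_lt_aleph0 ℤ (Additive A))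
    rw [hn] at h1'
    norm_cast at h1'
    omega
  have htor : Module.IsTorsion ℤ (Additive A ⧸ LinearMap.range f) :=
    rank_eq_zero_iff_isTorsion.mp hq0
  obtain ⟨n, hn⟩ := @htor (Submodule.Quotient.mk (Additive.ofMul a))
  have hn' : (n : ℤ) • Submodule.Quotient.mk (p := LinearMap.range f) (Additive.ofMul a) = 0 := hn
  rw [← Submodule.Quotient.mk_smul, Submodule.Quotient.mk_eq_zero] at hn'
  have hnz : (n : ℤ) ≠ 0 := nonZeroDivisors.coe_ne_zero n
  refine ⟨(n : ℤ).natAbs, Int.natAbs_pos.mpr hnz, ?_⟩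
  have hmemrange : ((n : ℤ).natAbs : ℤ) • Additive.ofMul a ∈ LinearMap.range f := by
    rcases Int.natAbs_eq (n : ℤ) with h | h
    · rw [← h]; exact hn'
    · rw [h, neg_smul] at hn'
      simpa using neg_mem hn'
  obtain ⟨y, hy⟩ := hmemrange
  refine ⟨y.toMul, ?_⟩
  apply Additive.ofMul.injective
  rw [← hmem y, hy, natCast_zsmul, ofMul_pow]

/-- For `φ(h,a) = (ψ(h), α(h)·γ(a))` on `H × A` with `Fix γ` finite,
`Fix φ` is finitely generated iff `Fix ψ` is finitely generated. -/
theorem fixed_fg_iff_of_fix_gamma_finite {H A : Type*} [Group H] [CommGroup A]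
    (hHfg : Group.FG H) (hZ : Subgroup.center H = ⊥) (hA : Group.FG A)
    (ψ : H ≃* H) (γ : A ≃* A) (α : H →* A) (φ : (H × A) ≃* (H × A))
    (hφ : ∀ (h : H) (a : A), φ (h, a) = (ψ h, α h * γ a))
    (hfin : Finite ↥(fixedSubgroup γ)) :
    Group.FG ↥(fixedSubgroup φ) ↔ Group.FG ↥(fixedSubgroup ψ) := by
  classical
  haveI := hA
  -- membership characterization for Fix φ
  have hFmem : ∀ x : H × A, x ∈ fixedSubgroup φ ↔ ψ x.1 = x.1 ∧ α x.1 * γ x.2 = x.2 := by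
    intro x
    constructor
    · intro hx
      have hx' : φ (x.1, x.2) = (x.1, x.2) := by rw [Prod.mk.eta]; exact hx
      rw [hφ] at hx'
      exact ⟨congrArg Prod.fst hx', congrArg Prod.snd hx'⟩
    · rintro ⟨h1, h2⟩
      show φ x = x
      conv_lhs => rw [← Prod.mk.eta (p := x), hφ, h1, h2]
  -- the homomorphism δ(a) = a * (γ a)⁻¹
  let δ : A →* A := MonoidHom.mk' (fun a => a * (γ a)⁻¹) (by
    intro a b
    simp only [map_mul, mul_inv_rev]
    rw [mul_comm (γ b)⁻¹ (γ a)⁻¹, mul_mul_mul_comm])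
  have hδ : ∀ a, δ a = a * (γ a)⁻¹ := fun _ => rfl
  haveI hδker : Finite δ.ker := by
    refine Finite.of_injective (fun x : δ.ker => (⟨x.1, ?_⟩ : fixedSubgroup γ)) ?_
    · have hx := x.2
      rw [MonoidHom.mem_ker, hδ, mul_inv_eq_one] at hx
      exact hx.symm
    · intro x y h
      simp only [Subtype.mk.injEq] at h
      exact Subtype.ext (Subtype.mk.inj h)
  -- δ.range has finite index in A
  haveI hRfin : Finite (A ⧸ δ.range) := by
    apply CommGroup.finite_of_fg_torsion
    intro q
    obtain ⟨a, rfl⟩ := QuotientGroup.mk_surjective q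
    obtain ⟨n, hn, hmem⟩ := aux_exists_pow_mem_range hA δ hδker a
    refine isOfFinOrder_iff_pow_eq_one.mpr ⟨n, hn, ?_⟩
    rw [← QuotientGroup.mk_pow, QuotientGroup.eq_one_iff]
    exact hmem
  haveI : δ.range.FiniteIndex := Subgroup.finiteIndex_of_finite_quotient
  -- the subgroup K of Fix ψ
  let g : ↥(fixedSubgroup ψ) →* A := α.comp (fixedSubgroup ψ).subtype
  let K : Subgroup ↥(fixedSubgroup ψ) := Subgroup.comap g δ.range
  haveI hKfi : K.FiniteIndex := by
    constructor
    rw [Subgroup.index_comap]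
    exact (Subgroup.instFiniteIndex_subgroupOf δ.range g.range).index_ne_zero
  haveI hKnormal : K.Normal := by
    constructor
    intro k hk s
    rw [Subgroup.mem_comap] at hk ⊢
    have hgs : g (s * k * s⁻¹) = g k := by
      rw [map_mul, map_mul, map_inv, mul_assoc, mul_comm (g k), mul_inv_cancel_left]
    rw [hgs]
    exact hk
  -- the projection p : Fix φ → Fix ψ
  let p : ↥(fixedSubgroup φ) →* ↥(fixedSubgroup ψ) := MonoidHom.mk'
    (fun x => ⟨x.1.1, ((hFmem x.1).mp x.2).1⟩) (fun x y => rfl)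
  have hprange : p.range = K := by
    ext ⟨h, hh⟩
    simp only [MonoidHom.mem_range, Subgroup.mem_comap]
    constructor
    · rintro ⟨x, hx⟩
      have hx1 : x.1.1 = h := congrArg Subtype.val hx
      have hx2 := ((hFmem x.1).mp x.2).2
      rw [hx1] at hx2
      refine ⟨x.1.2, ?_⟩
      rw [hδ]
      exact (eq_mul_inv_iff_mul_eq.mpr hx2).symm
    · rintro ⟨a, ha⟩
      rw [hδ] at ha
      have ha2 : a * (γ a)⁻¹ = α h := ha
      have ha' : α h * γ a = a := by
        rw [← ha2, mul_assoc, inv_mul_cancel, mul_one]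
      exact ⟨⟨(h, a), (hFmem (h, a)).mpr ⟨hh, ha'⟩⟩, rfl⟩
  -- the kernel of p is finite
  haveI hpker : Finite p.ker := by
    refine Finite.of_injective (fun x : p.ker => (⟨x.1.1.2, ?_⟩ : fixedSubgroup γ)) ?_
    · have h1 : x.1.1.1 = 1 := congrArg Subtype.val x.2
      have h2 := ((hFmem x.1.1).mp x.1.2).2
      rw [h1, map_one, one_mul] at h2
      exact h2
    · intro x y hxy
      have hx1 : x.1.1.1 = 1 := congrArg Subtype.val x.2
      have hy1 : y.1.1.1 = 1 := congrArg Subtype.val y.2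
      have h2 : x.1.1.2 = y.1.1.2 := congrArg Subtype.val hxy
      exact Subtype.ext (Subtype.ext (Prod.ext (hx1.trans hy1.symm) h2))
  constructor
  · intro hF
    haveI := hF
    have hK : K.FG := by
      have : p.range.FG := (Group.fg_iff_subgroup_fg p.range).mp (Group.fg_range p)
      rwa [hprange] at this
    refine aux_fg_of_surjective_ker (QuotientGroup.mk' K) (QuotientGroup.mk'_surjective K) ?_ ?_
    · rw [QuotientGroup.ker_mk']
      exact hK
    · haveI : Finite (↥(fixedSubgroup ψ) ⧸ K) := Subgroup.finite_quotient_of_finiteIndex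
      exact Group.fg_of_finite
  · intro hS
    haveI := hS
    haveI hK : Group.FG K := Subgroup.fg_of_index_ne_zero K
    refine aux_fg_of_surjective_ker p.rangeRestrict p.rangeRestrict_surjective ?_ ?_
    · rw [MonoidHom.ker_rangeRestrict]
      exact (Group.fg_iff_subgroup_fg p.ker).mp Group.fg_of_finite
    · have : Group.FG ↥K := hK
      rw [hprange]
      exact this
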